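/- Let X be a random vector in ℝⁿ such that X ∈ B almost surely, where B is a Borel subset of ℝⁿ. Suppose there exist a measurable function d : B → ℝ^m and a constant c > 0 such that ‖d(x) − d(y)‖ ≥ c‖x − y‖ for all x, y ∈ B. Then P(X ∈ C_m(X)) = 1. -/

import Mathlib

open MeasureTheory Filter Metric
open scoped ENNReal NNReal

-- Key density lemma: a finite measure on ℝ^m has positive lower m-density a.e.
theorem ae_pos_liminf_density {m : ℕ} (ν : Measure (EuclideanSpace ℝ (Fin m)))
    [IsFiniteMeasure ν] :
    ∀ᵐ y ∂ν, 0 < Filter.liminf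
      (fun r : ℝ => ν (Metric.ball y r) / ENNReal.ofReal (r ^ m))
      (nhdsWithin 0 (Set.Ioi 0)) := by
  set E := {y : EuclideanSpace ℝ (Fin m) | ¬ 0 < Filter.liminf
      (fun r : ℝ => ν (Metric.ball y r) / ENNReal.ofReal (r ^ m))
      (nhdsWithin 0 (Set.Ioi 0))} with hE
  rw [ae_iff]
  -- show ν E = 0
  have hEk : ∀ k : ℕ, ν (E ∩ closedBall 0 k) = 0 := by
    intro k
    set κ : ℝ≥0∞ := volume (closedBall (0 : EuclideanSpace ℝ (Fin m)) 1) with hκ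
    have hκpos : 0 < κ := measure_closedBall_pos _ _ one_pos
    have hκlt : κ < ∞ := measure_closedBall_lt_top
    set C : ℝ≥0∞ := volume (closedBall (0 : EuclideanSpace ℝ (Fin m)) k) with hC
    have hClt : C < ∞ := measure_closedBall_lt_top
    have key : ∀ δ : ℝ≥0∞, 0 < δ → δ ≠ ∞ → ν (E ∩ closedBall 0 k) ≤ δ * C := by
      intro δ hδ hδt
      have h2m : (ENNReal.ofReal ((2:ℝ) ^ m)) ≠ 0 := by positivity
      have h2mt : (ENNReal.ofReal ((2:ℝ) ^ m)) ≠ ∞ := ENNReal.ofReal_ne_top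
      set t : ℝ≥0∞ := δ * κ / ENNReal.ofReal ((2:ℝ)^m) with ht
      have htpos : 0 < t := by
        apply ENNReal.div_pos
        · exact (ENNReal.mul_pos hδ.ne' hκpos.ne').ne'
        · exact h2mt
      haveI : IsLocallyFiniteMeasure (δ • (volume : Measure (EuclideanSpace ℝ (Fin m)))) := by
        refine ⟨fun x => ?_⟩
        obtain ⟨s, hsmem, hs⟩ := (volume : Measure (EuclideanSpace ℝ (Fin m))).finiteAt_nhds x
        exact ⟨s, hsmem, by
          simp only [Measure.smul_apply, smul_eq_mul]
          exact ENNReal.mul_lt_top hδt.lt_top hs⟩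
      have main := (Besicovitch.vitaliFamily ν).measure_le_of_frequently_le
        (δ • volume) (Measure.AbsolutelyContinuous.rfl) (E ∩ closedBall 0 k) ?_
      · calc ν (E ∩ closedBall 0 k) ≤ (δ • volume) (E ∩ closedBall 0 k) := main
          _ ≤ δ * C := by
              simp only [Measure.smul_apply, smul_eq_mul]
              exact mul_le_mul_right (measure_mono Set.inter_subset_right) δ
      · intro x hx
        have hx0 : Filter.liminf
            (fun r : ℝ => ν (Metric.ball x r) / ENNReal.ofReal (r ^ m))
            (nhdsWithin 0 (Set.Ioi 0)) = 0 := by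
          have := hx.1
          simpa [hE, pos_iff_ne_zero] using this
        have hfreq : ∃ᶠ r in nhdsWithin (0:ℝ) (Set.Ioi 0),
            ν (Metric.ball x r) / ENNReal.ofReal (r ^ m) < t := by
          exact Filter.frequently_lt_of_liminf_lt (h := by rw [hx0]; exact htpos)
        -- convert to frequently statement about closed balls
        have hfreq2 : ∃ᶠ r in nhdsWithin (0:ℝ) (Set.Ioi 0),
            ν (closedBall x r) ≤ (δ • volume) (closedBall x r) := by
          have htend : Filter.Tendsto (fun r : ℝ => 2 * r)
              (nhdsWithin 0 (Set.Ioi 0)) (nhdsWithin 0 (Set.Ioi 0)) := by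
            apply tendsto_nhdsWithin_of_tendsto_nhds_of_eventually_within
            · have := ((continuous_mul_left (2:ℝ)).tendsto 0).mono_left
                (nhdsWithin_le_nhds (s := Set.Ioi (0:ℝ)))
              simpa using this
            · filter_upwards [self_mem_nhdsWithin] with r hr
              exact Set.mem_Ioi.2 (mul_pos two_pos hr)
          have htend2 : Filter.Tendsto (fun r : ℝ => r / 2)
              (nhdsWithin 0 (Set.Ioi 0)) (nhdsWithin 0 (Set.Ioi 0)) := by
            apply tendsto_nhdsWithin_of_tendsto_nhds_of_eventually_within
            · have := ((continuous_mul_left (2:ℝ)⁻¹).tendsto 0).mono_left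
                (nhdsWithin_le_nhds (s := Set.Ioi (0:ℝ)))
              simpa [div_eq_inv_mul] using this
            · filter_upwards [self_mem_nhdsWithin] with r hr
              have : (0:ℝ) < r := hr
              exact Set.mem_Ioi.2 (by positivity)
          have h2 : ∃ᶠ s in nhdsWithin (0:ℝ) (Set.Ioi 0),
              ν (Metric.ball x (2*s)) / ENNReal.ofReal ((2*s) ^ m) < t := by
            apply htend2.frequently
            apply hfreq.mono
            intro r hr
            simpa [show (2:ℝ)*(r/2) = r by ring] using hr
          have h3 := h2.and_eventually self_mem_nhdsWithin
          apply h3.mono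
          rintro s ⟨hs1, hs2⟩
          have hs0 : (0:ℝ) < s := hs2
          have hball : ν (closedBall x s) ≤ ν (Metric.ball x (2*s)) :=
            measure_mono (closedBall_subset_ball (by linarith))
          have hk0 : ENNReal.ofReal ((2*s) ^ m) ≠ 0 := by positivity
          have hkt : ENNReal.ofReal ((2*s) ^ m) ≠ ∞ := ENNReal.ofReal_ne_top
          have hlt : ν (Metric.ball x (2*s)) < t * ENNReal.ofReal ((2*s) ^ m) := by
            rwa [ENNReal.div_lt_iff (Or.inl hk0) (Or.inl hkt)] at hs1
          have heq : t * ENNReal.ofReal ((2*s) ^ m) = δ * κ * ENNReal.ofReal (s ^ m) := by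
            rw [mul_pow, ENNReal.ofReal_mul (by positivity), ← mul_assoc, ht,
              ENNReal.div_mul_cancel h2m h2mt]
          have hvol : (δ • (volume : Measure (EuclideanSpace ℝ (Fin m)))) (closedBall x s)
              = δ * (ENNReal.ofReal (s ^ m) * κ) := by
            simp only [Measure.smul_apply, smul_eq_mul]
            rw [Measure.addHaar_closedBall' _ _ hs0.le, finrank_euclideanSpace_fin]
          calc ν (closedBall x s) ≤ ν (Metric.ball x (2*s)) := hball
            _ ≤ t * ENNReal.ofReal ((2*s) ^ m) := hlt.le
            _ = δ * (ENNReal.ofReal (s ^ m) * κ) := by rw [heq]; ring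
            _ = _ := hvol.symm
        exact (Besicovitch.tendsto_filterAt ν x).frequently hfreq2
    -- let δ → 0
    refine le_antisymm ?_ zero_le
    refine ENNReal.le_of_forall_pos_le_add fun ε hε _ => ?_
    rw [zero_add]
    have hC1 : C + 1 ≠ 0 := by simp
    have hC1t : C + 1 ≠ ∞ := by simp [hClt.ne]
    calc ν (E ∩ closedBall 0 k) ≤ ((ε : ℝ≥0∞) / (C+1)) * C := by
          apply key
          · exact ENNReal.div_pos (by exact_mod_cast hε.ne') hC1t
          · exact (ENNReal.div_lt_top ENNReal.coe_ne_top hC1).ne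
      _ ≤ ((ε : ℝ≥0∞) / (C+1)) * (C+1) := by
          exact mul_le_mul_right (le_add_right le_rfl) _
      _ = ε := ENNReal.div_mul_cancel hC1 hC1t
  have : E ⊆ ⋃ k : ℕ, E ∩ closedBall 0 k := by
    intro y hy
    obtain ⟨k, hk⟩ := exists_nat_ge (‖y‖)
    exact Set.mem_iUnion.2 ⟨k, hy, mem_closedBall_zero_iff.2 hk⟩
  show ν E = 0
  refine le_antisymm ?_ zero_le
  calc ν E ≤ ν (⋃ k : ℕ, E ∩ closedBall 0 k) := measure_mono this
    _ ≤ ∑' k : ℕ, ν (E ∩ closedBall 0 k) := measure_iUnion_le _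
    _ = 0 := by simp [hEk]


/-- If `X ∈ B` a.s. for a Borel set `B ⊆ ℝⁿ` and there is a measurable
map `d : B → ℝ^m` with `‖d x - d y‖ ≥ c ‖x - y‖` on `B` for some `c > 0`, then
`P(X ∈ C_m(X)) = 1`. -/
theorem ae_mem_mould_of_dilation {Ω : Type*} [MeasurableSpace Ω]
    (μ : Measure Ω) [IsProbabilityMeasure μ] {n m : ℕ}
    (X : Ω → EuclideanSpace ℝ (Fin n)) (hX : Measurable X)
    (B : Set (EuclideanSpace ℝ (Fin n))) (hB : MeasurableSet B)
    (hXB : ∀ᵐ ω ∂μ, X ω ∈ B)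
    (d : EuclideanSpace ℝ (Fin n) → EuclideanSpace ℝ (Fin m))
    (hd : Measurable (B.restrict d))
    (c : ℝ) (hc : 0 < c)
    (hdil : ∀ x ∈ B, ∀ y ∈ B, c * ‖x - y‖ ≤ ‖d x - d y‖) :
    μ {ω | 0 < Filter.liminf
        (fun ε : ℝ => μ {ω' | ‖X ω' - X ω‖ < ε} / ENNReal.ofReal (ε ^ m))
        (nhdsWithin 0 (Set.Ioi 0))} = 1 := by
  classical
  -- measurable extension of d
  set D : EuclideanSpace ℝ (Fin n) → EuclideanSpace ℝ (Fin m) :=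
    fun x => if h : x ∈ B then B.restrict d ⟨x, h⟩ else 0 with hD
  have hDm : Measurable D := Measurable.dite hd measurable_const hB
  have hDeq : ∀ x ∈ B, D x = d x := fun x hx => by simp [hD, hx]; rfl
  set Y : Ω → EuclideanSpace ℝ (Fin m) := fun ω => D (X ω) with hY
  have hYm : Measurable Y := hDm.comp hX
  set ν : Measure (EuclideanSpace ℝ (Fin m)) := μ.map Y with hν
  haveI : IsProbabilityMeasure ν := Measure.isProbabilityMeasure_map hYm.aemeasurable
  have hdens := ae_pos_liminf_density ν
  have hpull : ∀ᵐ ω ∂μ, 0 < Filter.liminf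
      (fun r : ℝ => ν (Metric.ball (Y ω) r) / ENNReal.ofReal (r ^ m))
      (nhdsWithin 0 (Set.Ioi 0)) := ae_of_ae_map hYm.aemeasurable hdens
  have hScompl : μ {ω | ¬ X ω ∈ B} = 0 := by
    rw [← ae_iff] ; exact hXB
  -- main pointwise claim
  have main : ∀ᵐ ω ∂μ, 0 < Filter.liminf
      (fun ε : ℝ => μ {ω' | ‖X ω' - X ω‖ < ε} / ENNReal.ofReal (ε ^ m))
      (nhdsWithin 0 (Set.Ioi 0)) := by
    filter_upwards [hXB, hpull] with ω hωB hωl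
    -- key comparison
    have hcomp : ∀ ε : ℝ, 0 < ε →
        ν (Metric.ball (Y ω) (c * ε)) ≤ μ {ω' | ‖X ω' - X ω‖ < ε} := by
      intro ε hε
      rw [hν, Measure.map_apply hYm measurableSet_ball]
      have hsub : Y ⁻¹' Metric.ball (Y ω) (c * ε) ⊆
          {ω' | ‖X ω' - X ω‖ < ε} ∪ {ω' | ¬ X ω' ∈ B} := by
        intro ω' hω'
        by_cases hB' : X ω' ∈ B
        · left
          have h1 : ‖Y ω' - Y ω‖ < c * ε := by
            simpa [dist_eq_norm] using hω'
          rw [hY] at h1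
          simp only at h1
          rw [hDeq _ hB', hDeq _ hωB] at h1
          have h2 := hdil _ hB' _ hωB
          have : c * ‖X ω' - X ω‖ < c * ε := lt_of_le_of_lt h2 h1
          exact (mul_lt_mul_iff_right₀ hc).1 this
        · right; exact hB'
      calc μ (Y ⁻¹' Metric.ball (Y ω) (c * ε))
          ≤ μ ({ω' | ‖X ω' - X ω‖ < ε} ∪ {ω' | ¬ X ω' ∈ B}) := measure_mono hsub
        _ ≤ μ {ω' | ‖X ω' - X ω‖ < ε} + μ {ω' | ¬ X ω' ∈ B} := measure_union_le _ _
        _ = μ {ω' | ‖X ω' - X ω‖ < ε} := by rw [hScompl, add_zero]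
    -- pick a lower bound b for the density liminf
    obtain ⟨b, hb0, hbl⟩ := exists_between hωl
    have hev : ∀ᶠ r in nhdsWithin (0:ℝ) (Set.Ioi 0),
        b < ν (Metric.ball (Y ω) r) / ENNReal.ofReal (r ^ m) :=
      Filter.eventually_lt_of_lt_liminf hbl
    have hev2 : ∀ᶠ r in nhdsWithin (0:ℝ) (Set.Ioi 0),
        b * ENNReal.ofReal (r ^ m) ≤ ν (Metric.ball (Y ω) r) := by
      filter_upwards [hev, self_mem_nhdsWithin] with r hr hr0
      have hr0' : (0:ℝ) < r := hr0
      have hk0 : ENNReal.ofReal (r ^ m) ≠ 0 := by positivity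
      have hkt : ENNReal.ofReal (r ^ m) ≠ ∞ := ENNReal.ofReal_ne_top
      exact (ENNReal.lt_div_iff_mul_lt (Or.inl hk0) (Or.inl hkt)).1 hr |>.le
    -- transfer along ε ↦ c * ε
    have htendc : Filter.Tendsto (fun ε : ℝ => c * ε)
        (nhdsWithin 0 (Set.Ioi 0)) (nhdsWithin 0 (Set.Ioi 0)) := by
      apply tendsto_nhdsWithin_of_tendsto_nhds_of_eventually_within
      · have := ((continuous_mul_left c).tendsto 0).mono_left
          (nhdsWithin_le_nhds (s := Set.Ioi (0:ℝ)))
        simpa using this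
      · filter_upwards [self_mem_nhdsWithin] with r hr
        have : (0:ℝ) < r := hr
        exact Set.mem_Ioi.2 (by positivity)
    have hev3 : ∀ᶠ ε in nhdsWithin (0:ℝ) (Set.Ioi 0),
        b * ENNReal.ofReal (c ^ m) ≤
          μ {ω' | ‖X ω' - X ω‖ < ε} / ENNReal.ofReal (ε ^ m) := by
      filter_upwards [htendc.eventually hev2, self_mem_nhdsWithin] with ε hε hε0
      have hε0' : (0:ℝ) < ε := hε0
      have h1 : b * ENNReal.ofReal ((c*ε) ^ m) ≤ μ {ω' | ‖X ω' - X ω‖ < ε} :=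
        le_trans hε (hcomp ε hε0')
      have hk0 : ENNReal.ofReal (ε ^ m) ≠ 0 := by positivity
      have hkt : ENNReal.ofReal (ε ^ m) ≠ ∞ := ENNReal.ofReal_ne_top
      rw [ENNReal.le_div_iff_mul_le (Or.inl hk0) (Or.inl hkt)]
      calc b * ENNReal.ofReal (c ^ m) * ENNReal.ofReal (ε ^ m)
          = b * ENNReal.ofReal ((c*ε) ^ m) := by
            rw [mul_pow, ENNReal.ofReal_mul (by positivity), mul_assoc]
        _ ≤ _ := h1
    have : b * ENNReal.ofReal (c ^ m) ≤ Filter.liminf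
        (fun ε : ℝ => μ {ω' | ‖X ω' - X ω‖ < ε} / ENNReal.ofReal (ε ^ m))
        (nhdsWithin 0 (Set.Ioi 0)) := Filter.le_liminf_of_le (by isBoundedDefault) hev3
    refine lt_of_lt_of_le ?_ this
    exact ENNReal.mul_pos hb0.ne' (by positivity)
  -- conclude
  set s := {ω | 0 < Filter.liminf
      (fun ε : ℝ => μ {ω' | ‖X ω' - X ω‖ < ε} / ENNReal.ofReal (ε ^ m))
      (nhdsWithin 0 (Set.Ioi 0))}
  have hcompl : μ sᶜ = 0 := by
    rw [Set.compl_setOf, ← ae_iff] ; exact main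
  have h1 : (1:ℝ≥0∞) ≤ μ s + μ sᶜ := by
    rw [← measure_univ (μ := μ)]
    exact (measure_mono (by simp [Set.union_compl_self])).trans (measure_union_le _ _)
  rw [hcompl, add_zero] at h1
  exact le_antisymm prob_le_one h1
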